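/- arXiv:2211.07816 — 3 statements merged into one kernel-verified Lean document; each statement's English description precedes it below -/
import Mathlib

section
/- (Main theorem: generalization error bound under label noise.) Let ν be a probability measure on a measurable space 𝒳, let q (the ground-truth conditional label distribution) and p_1, …, p_N (the N clients' possibly noisy conditional label distributions) be conditional label distributions over ν, let n_1, …, n_N > 0 with n = ∑_{k=1}^{N} n_k, and let f be a measurable classifier satisfying |f x i| ≤ Ω for all x ∈ 𝒳 and all i, where Ω ≥ 0. Then the generalization error of f satisfies | ∑_{k=1}^{N} (n_k/n) L(f, p_k) − L(f, q) | ≤ Ω · ∑_{k=1}^{N} (n_k/n) ∫_𝒳 ∑_{i=1}^{C} | p_k x i − q x i | dν(x). -/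
open MeasureTheory Real

/-- The cross-entropy loss of classifier `f` at point `(x, i)`:
`ℓ_f(x, i) = log (∑ r, exp (f x r)) − f x i`. -/
noncomputable def crossEntropyLoss {𝒳 : Type*} {C : ℕ} (f : 𝒳 → Fin C → ℝ)
    (x : 𝒳) (i : Fin C) : ℝ :=
  Real.log (∑ r, Real.exp (f x r)) - f x i

/-- The risk of classifier `f` under feature distribution `ν` and conditional label
distribution `p`: `L(f, p) = ∫ ∑ i, p x i · ℓ_f(x, i) dν(x)`. -/
noncomputable def risk {𝒳 : Type*} [MeasurableSpace 𝒳] {C : ℕ} (ν : Measure 𝒳)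
    (f : 𝒳 → Fin C → ℝ) (p : 𝒳 → Fin C → ℝ) : ℝ :=
  ∫ x, ∑ i, p x i * crossEntropyLoss f x i ∂ν

/-- **Theorem (generalization error bound under label noise).**
All `N` clients share the feature distribution `ν`; client `k` has (possibly noisy)
conditional label distribution `p k` and `n k > 0` data points; `q` is the ground-truth
conditional label distribution; the classifier `f` is measurable with `|f x i| ≤ Ω`.
Then the generalization error, i.e., the absolute difference between the empirical risk
`∑ k, (n k / n) L(f, p k)` of the global model and its ground-truth risk `L(f, q)`, is at
most `Ω · ∑ k, (n k / n) ∫ ∑ i, |p k x i − q x i| dν(x)`. -/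
theorem generalization_error_bound
    {𝒳 : Type*} [MeasurableSpace 𝒳] {C : ℕ} (hC : 1 ≤ C)
    (ν : Measure 𝒳) [IsProbabilityMeasure ν]
    (N : ℕ) (hN : 1 ≤ N)
    (p : Fin N → 𝒳 → Fin C → ℝ) (q : 𝒳 → Fin C → ℝ)
    (hpm : ∀ k, Measurable (p k)) (hqm : Measurable q)
    (hp0 : ∀ k x i, 0 ≤ p k x i) (hq0 : ∀ x i, 0 ≤ q x i)
    (hp1 : ∀ k, ∀ᵐ x ∂ν, ∑ i, p k x i = 1) (hq1 : ∀ᵐ x ∂ν, ∑ i, q x i = 1)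
    (n : Fin N → ℕ) (hn : ∀ k, 0 < n k)
    (f : 𝒳 → Fin C → ℝ) (hf : Measurable f)
    (Ω : ℝ) (hΩ : 0 ≤ Ω) (hB : ∀ x i, |f x i| ≤ Ω) :
    |∑ k, ((n k : ℝ) / (∑ j, (n j : ℝ))) * risk ν f (p k) - risk ν f q|
      ≤ Ω * ∑ k, ((n k : ℝ) / (∑ j, (n j : ℝ))) *
          ∫ x, ∑ i, |p k x i - q x i| ∂ν := by

  classical
  -- abbreviations
  set S : ℝ := ∑ j, (n j : ℝ) with hSdef
  have hS : 0 < S := Finset.sum_pos (fun j _ => by exact_mod_cast hn j)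
    ⟨⟨0, hN⟩, Finset.mem_univ _⟩
  set M : ℝ := Real.log C + 2 * Ω with hMdef
  have hlogC : 0 ≤ Real.log C := Real.log_nonneg (by exact_mod_cast hC)
  have hM : 0 ≤ M := by positivity
  -- bound on the loss
  have hloss : ∀ x i, |crossEntropyLoss f x i| ≤ M := by
    intro x i
    have hsum_lb : (C : ℝ) * Real.exp (-Ω) ≤ ∑ r, Real.exp (f x r) := by
      calc (C : ℝ) * Real.exp (-Ω) = ∑ _r : Fin C, Real.exp (-Ω) := by
            simp [Finset.sum_const, mul_comm]
        _ ≤ ∑ r, Real.exp (f x r) := by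
            apply Finset.sum_le_sum
            intro r _
            exact Real.exp_le_exp.mpr (neg_le_of_abs_le (hB x r))
    have hsum_ub : ∑ r, Real.exp (f x r) ≤ (C : ℝ) * Real.exp Ω := by
      calc ∑ r, Real.exp (f x r) ≤ ∑ _r : Fin C, Real.exp Ω := by
            apply Finset.sum_le_sum
            intro r _
            exact Real.exp_le_exp.mpr (le_of_abs_le (hB x r))
        _ = (C : ℝ) * Real.exp Ω := by simp [Finset.sum_const, mul_comm]
    have hCpos' : (0:ℝ) < C := by positivity
    have hpos : (0:ℝ) < (C : ℝ) * Real.exp (-Ω) := by positivity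
    have hlog_ub : Real.log (∑ r, Real.exp (f x r)) ≤ Real.log C + Ω := by
      calc Real.log (∑ r, Real.exp (f x r)) ≤ Real.log ((C : ℝ) * Real.exp Ω) :=
            Real.log_le_log (lt_of_lt_of_le hpos hsum_lb) hsum_ub
        _ = Real.log C + Ω := by rw [Real.log_mul (ne_of_gt hCpos') (Real.exp_ne_zero _), Real.log_exp]
    have hlog_lb : Real.log C - Ω ≤ Real.log (∑ r, Real.exp (f x r)) := by
      calc Real.log C - Ω = Real.log ((C : ℝ) * Real.exp (-Ω)) := by
            rw [Real.log_mul (ne_of_gt hCpos') (Real.exp_ne_zero _), Real.log_exp]; ring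
        _ ≤ Real.log (∑ r, Real.exp (f x r)) := Real.log_le_log hpos hsum_lb
    have h1 : |Real.log (∑ r, Real.exp (f x r))| ≤ Real.log C + Ω :=
      abs_le.mpr ⟨by linarith, hlog_ub⟩
    have h2 := hB x i
    calc |crossEntropyLoss f x i|
        ≤ |Real.log (∑ r, Real.exp (f x r))| + |f x i| := abs_sub _ _
      _ ≤ (Real.log C + Ω) + Ω := add_le_add h1 h2
      _ = M := by rw [hMdef]; ring
  -- measurability of the loss
  have hlm : ∀ i : Fin C, Measurable (fun x => crossEntropyLoss f x i) := by
    intro i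
    apply Measurable.sub
    · exact Real.measurable_log.comp
        (Finset.measurable_sum _ fun r _ =>
          Real.measurable_exp.comp ((measurable_pi_apply r).comp hf))
    · exact (measurable_pi_apply i).comp hf
  -- integrability of the risk integrand
  have hint : ∀ (g : 𝒳 → Fin C → ℝ), Measurable g → (∀ x i, 0 ≤ g x i) →
      (∀ᵐ x ∂ν, ∑ i, g x i = 1) →
      Integrable (fun x => ∑ i, g x i * crossEntropyLoss f x i) ν := by
    intro g hgm hg0 hg1
    apply Integrable.mono' (integrable_const M)
    · exact (Finset.measurable_sum _ fun i _ =>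
        ((measurable_pi_apply i).comp hgm).mul (hlm i)).aestronglyMeasurable
    · filter_upwards [hg1] with x hx
      calc ‖∑ i, g x i * crossEntropyLoss f x i‖
          ≤ ∑ i, ‖g x i * crossEntropyLoss f x i‖ := norm_sum_le _ _
        _ = ∑ i, g x i * |crossEntropyLoss f x i| := by
            simp only [norm_mul, Real.norm_eq_abs]
            exact Finset.sum_congr rfl fun i _ => by rw [abs_of_nonneg (hg0 x i)]
        _ ≤ ∑ i, g x i * M :=
            Finset.sum_le_sum fun i _ =>
              mul_le_mul_of_nonneg_left (hloss x i) (hg0 x i)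
        _ = M := by rw [← Finset.sum_mul, hx, one_mul]
  have hintp : ∀ k, Integrable (fun x => ∑ i, p k x i * crossEntropyLoss f x i) ν :=
    fun k => hint (p k) (hpm k) (hp0 k) (hp1 k)
  have hintq : Integrable (fun x => ∑ i, q x i * crossEntropyLoss f x i) ν :=
    hint q hqm hq0 hq1
  -- integrability of the total-variation integrand
  have hintd : ∀ k, Integrable (fun x => ∑ i, |p k x i - q x i|) ν := by
    intro k
    apply Integrable.mono' (integrable_const (2 : ℝ))
    · exact (Finset.measurable_sum _ fun i _ =>
        (((measurable_pi_apply i).comp (hpm k)).sub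
          ((measurable_pi_apply i).comp hqm)).abs).aestronglyMeasurable
    · filter_upwards [hp1 k, hq1] with x hxp hxq
      have : ∀ i : Fin C, |p k x i - q x i| ≤ p k x i + q x i := fun i =>
        (abs_sub _ _).trans (by
          rw [abs_of_nonneg (hp0 k x i), abs_of_nonneg (hq0 x i)])
      calc ‖∑ i, |p k x i - q x i|‖ = ∑ i, |p k x i - q x i| := by
            rw [Real.norm_eq_abs, abs_of_nonneg (Finset.sum_nonneg fun i _ => abs_nonneg _)]
        _ ≤ ∑ i, (p k x i + q x i) := Finset.sum_le_sum fun i _ => this i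
        _ = 2 := by rw [Finset.sum_add_distrib, hxp, hxq]; norm_num
  -- per-client bound
  have hdiff : ∀ k, |risk ν f (p k) - risk ν f q|
      ≤ Ω * ∫ x, ∑ i, |p k x i - q x i| ∂ν := by
    intro k
    have hsub : risk ν f (p k) - risk ν f q
        = ∫ x, (∑ i, p k x i * crossEntropyLoss f x i
            - ∑ i, q x i * crossEntropyLoss f x i) ∂ν := by
      rw [integral_sub (hintp k) hintq]; rfl
    rw [hsub]
    have hptwise : ∀ᵐ x ∂ν,
        ‖∑ i, p k x i * crossEntropyLoss f x i
            - ∑ i, q x i * crossEntropyLoss f x i‖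
          ≤ Ω * ∑ i, |p k x i - q x i| := by
      filter_upwards [hp1 k, hq1] with x hxp hxq
      have hkey : ∑ i, p k x i * crossEntropyLoss f x i
          - ∑ i, q x i * crossEntropyLoss f x i
          = -∑ i, (p k x i - q x i) * f x i := by
        rw [← Finset.sum_sub_distrib]
        have : ∀ i : Fin C, p k x i * crossEntropyLoss f x i
            - q x i * crossEntropyLoss f x i
            = (p k x i - q x i) * Real.log (∑ r, Real.exp (f x r))
              - (p k x i - q x i) * f x i := by
          intro i; unfold crossEntropyLoss; ring
        rw [Finset.sum_congr rfl fun i _ => this i, Finset.sum_sub_distrib,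
          ← Finset.sum_mul, Finset.sum_sub_distrib, hxp, hxq]
        ring
      rw [hkey, Real.norm_eq_abs, abs_neg]
      calc |∑ i, (p k x i - q x i) * f x i|
          ≤ ∑ i, |(p k x i - q x i) * f x i| := Finset.abs_sum_le_sum_abs _ _
        _ = ∑ i, |p k x i - q x i| * |f x i| := by simp [abs_mul]
        _ ≤ ∑ i, |p k x i - q x i| * Ω :=
            Finset.sum_le_sum fun i _ =>
              mul_le_mul_of_nonneg_left (hB x i) (abs_nonneg _)
        _ = Ω * ∑ i, |p k x i - q x i| := by rw [← Finset.sum_mul]; ring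
    calc |∫ x, (∑ i, p k x i * crossEntropyLoss f x i
            - ∑ i, q x i * crossEntropyLoss f x i) ∂ν|
        ≤ ∫ x, Ω * ∑ i, |p k x i - q x i| ∂ν := by
          rw [← Real.norm_eq_abs]
          exact norm_integral_le_of_norm_le ((hintd k).const_mul Ω) hptwise
      _ = Ω * ∫ x, ∑ i, |p k x i - q x i| ∂ν := integral_const_mul Ω _
  -- combine
  have hc0 : ∀ k : Fin N, 0 ≤ (n k : ℝ) / S := fun k =>
    div_nonneg (Nat.cast_nonneg _) hS.le
  have hc1 : ∑ k, (n k : ℝ) / S = 1 := by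
    rw [← Finset.sum_div]
    exact div_self hS.ne'
  calc |∑ k, ((n k : ℝ) / S) * risk ν f (p k) - risk ν f q|
      = |∑ k, ((n k : ℝ) / S) * (risk ν f (p k) - risk ν f q)| := by
        rw [Finset.sum_congr rfl fun k _ => mul_sub ((n k : ℝ) / S) _ _,
          Finset.sum_sub_distrib, ← Finset.sum_mul, hc1, one_mul]
    _ ≤ ∑ k, |((n k : ℝ) / S) * (risk ν f (p k) - risk ν f q)| :=
        Finset.abs_sum_le_sum_abs _ _
    _ ≤ ∑ k, ((n k : ℝ) / S) * (Ω * ∫ x, ∑ i, |p k x i - q x i| ∂ν) := by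
        apply Finset.sum_le_sum
        intro k _
        rw [abs_mul, abs_of_nonneg (hc0 k)]
        exact mul_le_mul_of_nonneg_left (hdiff k) (hc0 k)
    _ = Ω * ∑ k, ((n k : ℝ) / S) * ∫ x, ∑ i, |p k x i - q x i| ∂ν := by
        rw [Finset.mul_sum]
        exact Finset.sum_congr rfl fun k _ => by ring
end

section
/- (Path-norm proxy bounds the output of a ReLU network.) For an L-layer ReLU network with parameters θ = (θ_0, …, θ_L) and any input x ∈ ℝ^{d_0} with |x_i| ≤ 1 for every coordinate i, every output component satisfies |f_k(x; θ)| ≤ ‖f(·; θ)‖_pnp, where ‖f(·; θ)‖_pnp is the path-norm proxy of the network. -/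
open Finset

/-- Pre-activations of a ReLU network with layer widths `d` and parameters `θ`
(`θ l i j` is the weight of the edge from node `i` of layer `l` to node `j` of
layer `l+1`) on input `x`.  `preact d θ x l` is the pre-activation vector
`a_{l+1}` of layer `l+1` (paper indexing): `a_1 j = ∑ i, θ 0 i j * x i` and
`a_{l+2} j = ∑ i, θ (l+1) i j * σ (a_{l+1} i)` where `σ t = max 0 t` is ReLU.
For an `L`-layer network (`L ≥ 1`) the `k`-th output is
`f_k(x; θ) = ∑ i, θ L i k * σ (a_L i) = preact d θ x L k`. -/
noncomputable def preact (d : ℕ → ℕ) (θ : ∀ l : ℕ, Fin (d l) → Fin (d (l + 1)) → ℝ)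
    (x : Fin (d 0) → ℝ) : (l : ℕ) → Fin (d (l + 1)) → ℝ
  | 0 => fun j => ∑ i, θ 0 i j * x i
  | (l + 1) => fun j => ∑ i, θ (l + 1) i j * max 0 (preact d θ x l i)

/-- The path-norm proxy of an `L`-layer ReLU network:
`‖f(·; θ)‖_pnp = ∑_{(i_0, …, i_{L+1})} ∏_{l=0}^{L} |θ_l(i_l, i_{l+1})|`,
the sum ranging over all paths through the network. -/
noncomputable def pathNormProxy (L : ℕ) (d : ℕ → ℕ)
    (θ : ∀ l : ℕ, Fin (d l) → Fin (d (l + 1)) → ℝ) : ℝ :=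
  ∑ i : (l : Fin (L + 2)) → Fin (d l), ∏ l : Fin (L + 1), |θ l (i l.castSucc) (i l.succ)|


noncomputable def Qw (d : ℕ → ℕ) (θ : ∀ l : ℕ, Fin (d l) → Fin (d (l + 1)) → ℝ) :
    (l : ℕ) → Fin (d (l + 1)) → ℝ
  | 0 => fun j => ∑ i, |θ 0 i j|
  | (l + 1) => fun j => ∑ i, |θ (l + 1) i j| * Qw d θ l i

lemma Qw_nonneg (d : ℕ → ℕ) (θ : ∀ l : ℕ, Fin (d l) → Fin (d (l + 1)) → ℝ) :
    ∀ l j, 0 ≤ Qw d θ l j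
  | 0, _ => Finset.sum_nonneg fun _ _ => abs_nonneg _
  | (l + 1), _ => Finset.sum_nonneg fun i _ =>
      mul_nonneg (abs_nonneg _) (Qw_nonneg d θ l i)

lemma abs_preact_le (d : ℕ → ℕ) (θ : ∀ l : ℕ, Fin (d l) → Fin (d (l + 1)) → ℝ)
    (x : Fin (d 0) → ℝ) (hx : ∀ i, |x i| ≤ 1) :
    ∀ l j, |preact d θ x l j| ≤ Qw d θ l j
  | 0, j => by
    refine (Finset.abs_sum_le_sum_abs _ _).trans (Finset.sum_le_sum fun i _ => ?_)
    rw [abs_mul]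
    exact mul_le_of_le_one_right (abs_nonneg _) (hx i)
  | (l + 1), j => by
    refine (Finset.abs_sum_le_sum_abs _ _).trans (Finset.sum_le_sum fun i _ => ?_)
    rw [abs_mul]
    refine mul_le_mul_of_nonneg_left ?_ (abs_nonneg _)
    calc |max 0 (preact d θ x l i)| ≤ |preact d θ x l i| := by
            rcases le_total (preact d θ x l i) 0 with h | h
            · simp [max_eq_left h]
            · simp [max_eq_right h]
      _ ≤ Qw d θ l i := abs_preact_le d θ x hx l i

lemma key (d : ℕ → ℕ) (θ : ∀ l : ℕ, Fin (d l) → Fin (d (l + 1)) → ℝ) :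
    ∀ L (w : Fin (d (L + 1)) → ℝ),
      (∑ q : (l : Fin (L + 2)) → Fin (d l),
        (∏ l : Fin (L + 1), |θ l (q l.castSucc) (q l.succ)|) * w (q (Fin.last (L + 1))))
      = ∑ i, Qw d θ L i * w i
  | 0, w => by
    refine Eq.trans (Fintype.sum_equiv (piFinTwoEquiv (fun l : Fin 2 => Fin (d l)))
      _ (fun p => |θ 0 p.1 p.2| * w p.2) (fun q => ?_)) ?_
    · simp only [piFinTwoEquiv_apply, Fin.prod_univ_succ, Fin.prod_univ_zero, mul_one]
      rfl
    · rw [Fintype.sum_prod_type_right]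
      refine Finset.sum_congr rfl fun j _ => ?_
      rw [Qw, Finset.sum_mul]
      exact Finset.sum_congr rfl fun i _ => rfl
  | (L + 1), w => by
    have h' : ∀ p : Fin (d (L + 2)) × ((l : Fin (L + 2)) → Fin (d l)),
        ((∏ l : Fin (L + 1), |θ l (p.2 l.castSucc) (p.2 l.succ)|) *
          (|θ (L + 1) (p.2 (Fin.last (L + 1))) p.1| * w p.1))
        = (∏ l : Fin (L + 2),
            |θ l ((Fin.snocEquiv (fun l : Fin (L + 3) => Fin (d l)) p) l.castSucc)
              ((Fin.snocEquiv (fun l : Fin (L + 3) => Fin (d l)) p) l.succ)|) *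
            w ((Fin.snocEquiv (fun l : Fin (L + 3) => Fin (d l)) p) (Fin.last (L + 2))) := by
      rintro ⟨j, q⟩
      simp only [Fin.snocEquiv_apply]
      conv_rhs => rw [Fin.prod_univ_castSucc]
      simp only [Fin.succ_castSucc, Fin.snoc_castSucc, Fin.succ_last, Fin.snoc_last,
        Fin.coe_castSucc, Fin.val_last]
      ring
    refine Eq.trans (Fintype.sum_equiv (Fin.snocEquiv (fun l : Fin (L + 3) => Fin (d l)))
      (fun p : Fin (d (L + 2)) × ((l : Fin (L + 2)) → Fin (d l)) =>
        (∏ l : Fin (L + 1), |θ l (p.2 l.castSucc) (p.2 l.succ)|) *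
          (|θ (L + 1) (p.2 (Fin.last (L + 1))) p.1| * w p.1))
      (fun q => (∏ l : Fin (L + 2), |θ l (q l.castSucc) (q l.succ)|) *
          w (q (Fin.last (L + 2))))
      h').symm ?_
    rw [Fintype.sum_prod_type_right]
    simp only [← Finset.mul_sum]
    refine Eq.trans (key d θ L (fun i => ∑ j, |θ (L + 1) i j| * w j)) ?_
    simp only [Qw, Finset.sum_mul, Finset.mul_sum]
    rw [Finset.sum_comm]
    exact Finset.sum_congr rfl fun j _ => Finset.sum_congr rfl fun i _ => by ring

/-- **Theorem (the path-norm proxy bounds the output of a ReLU network).**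
For an `L`-layer ReLU network (`L ≥ 1`) and any input `x` with `|x i| ≤ 1` for every
coordinate `i`, every output component satisfies `|f_k(x; θ)| ≤ ‖f(·; θ)‖_pnp`. -/
theorem relu_output_le_pathNormProxy (L : ℕ) (hL : 1 ≤ L) (d : ℕ → ℕ)
    (θ : ∀ l : ℕ, Fin (d l) → Fin (d (l + 1)) → ℝ)
    (x : Fin (d 0) → ℝ) (hx : ∀ i, |x i| ≤ 1) (k : Fin (d (L + 1))) :
    |preact d θ x L k| ≤ pathNormProxy L d θ := by
  have hQ : pathNormProxy L d θ = ∑ i, Qw d θ L i := by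
    have := key d θ L (fun _ => 1)
    simpa [pathNormProxy] using this
  calc |preact d θ x L k| ≤ Qw d θ L k := abs_preact_le d θ x hx L k
    _ ≤ ∑ i, Qw d θ L i :=
        Finset.single_le_sum (fun i _ => Qw_nonneg d θ L i) (Finset.mem_univ k)
    _ = pathNormProxy L d θ := hQ.symm
end

section
/- (Corollary: generalization error bound with the path-norm proxy for ReLU networks.) Let ν be a probability measure on ℝ^{d_0} such that ν-almost every x satisfies x_i ∈ [0, 1] for every coordinate i. Let q (the ground-truth conditional label distribution) and p_1, …, p_N (the N clients' conditional label distributions) be conditional label distributions over ν, let n_1, …, n_N > 0 with n = ∑_{k=1}^{N} n_k, and let the classifier be the output map x ↦ (f_1(x; θ), …, f_C(x; θ)) of an L-layer ReLU network with parameters θ and d_{L+1} = C output nodes. Then | ∑_{k=1}^{N} (n_k/n) L(f(·; θ), p_k) − L(f(·; θ), q) | ≤ ‖f(·; θ)‖_pnp · ∑_{k=1}^{N} (n_k/n) ∫ ∑_{i=1}^{C} | p_k x i − q x i | dν(x). -/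
open MeasureTheory Real Finset

noncomputable def pathB (d : ℕ → ℕ) (θ : ∀ l : ℕ, Fin (d l) → Fin (d (l + 1)) → ℝ) :
    (l : ℕ) → Fin (d (l + 1)) → ℝ
  | 0 => fun j => ∑ i, |θ 0 i j|
  | (l + 1) => fun j => ∑ i, |θ (l + 1) i j| * pathB d θ l i

lemma pathB_nonneg (d : ℕ → ℕ) (θ : ∀ l : ℕ, Fin (d l) → Fin (d (l + 1)) → ℝ) :
    ∀ l j, 0 ≤ pathB d θ l j := by
  intro l
  induction l with
  | zero => intro j; exact Finset.sum_nonneg fun i _ => abs_nonneg _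
  | succ l ih =>
    intro j
    exact Finset.sum_nonneg fun i _ => mul_nonneg (abs_nonneg _) (ih i)

lemma abs_preact_le_s5 (d : ℕ → ℕ) (θ : ∀ l : ℕ, Fin (d l) → Fin (d (l + 1)) → ℝ)
    (x : Fin (d 0) → ℝ) (hx : ∀ i, |x i| ≤ 1) :
    ∀ l j, |preact d θ x l j| ≤ pathB d θ l j := by
  intro l
  induction l with
  | zero =>
    intro j
    refine (Finset.abs_sum_le_sum_abs _ _).trans (Finset.sum_le_sum fun i _ => ?_)
    rw [abs_mul]
    exact mul_le_of_le_one_right (abs_nonneg _) (hx i)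
  | succ l ih =>
    intro j
    refine (Finset.abs_sum_le_sum_abs _ _).trans (Finset.sum_le_sum fun i _ => ?_)
    rw [abs_mul]
    refine mul_le_mul_of_nonneg_left ?_ (abs_nonneg _)
    rw [abs_of_nonneg (le_max_left 0 _)]
    exact (max_le (by
      have := abs_nonneg (preact d θ x l i); linarith [ih i]) ((le_abs_self _).trans (ih i)))


lemma sum_paths_fixed_last (d : ℕ → ℕ) (θ : ∀ l : ℕ, Fin (d l) → Fin (d (l + 1)) → ℝ) :
    ∀ (m : ℕ) (e : Fin (d (m + 1))),
      (∑ i : (l : Fin (m + 1)) → Fin (d l),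
        (∏ l : Fin m, |θ l (i l.castSucc) (i l.succ)|) * |θ m (i (Fin.last m)) e|)
        = pathB d θ m e := by
  intro m
  induction m with
  | zero =>
    intro e
    rw [← Equiv.sum_comp (Equiv.piUnique (fun l : Fin 1 => Fin (d l))).symm]
    simp only [Equiv.piUnique_symm_apply, Fin.prod_univ_zero, one_mul, pathB]
    refine Finset.sum_congr rfl fun x _ => ?_
    congr 1
  | succ m ih =>
    intro e
    rw [← Equiv.sum_comp (Fin.snocEquiv (fun l : Fin (m + 2) => Fin (d l.val)))]
    rw [Fintype.sum_prod_type]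
    show _ = pathB d θ (m + 1) e
    rw [pathB]
    refine Finset.sum_congr rfl fun j _ => ?_
    rw [← ih j, Finset.mul_sum]
    refine Finset.sum_congr rfl fun i' _ => ?_
    simp only [Fin.snocEquiv, Equiv.coe_fn_mk, Fin.prod_univ_castSucc, Fin.succ_castSucc,
      Fin.snoc_castSucc, Fin.succ_last, Fin.snoc_last, Fin.coe_castSucc, Fin.val_last]
    ring

lemma pathNormProxy_eq (L : ℕ) (d : ℕ → ℕ) (θ : ∀ l : ℕ, Fin (d l) → Fin (d (l + 1)) → ℝ) :
    pathNormProxy L d θ = ∑ j, pathB d θ L j := by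
  rw [pathNormProxy]
  rw [← Equiv.sum_comp (Fin.snocEquiv (fun l : Fin (L + 2) => Fin (d l.val)))]
  rw [Fintype.sum_prod_type]
  refine Finset.sum_congr rfl fun j _ => ?_
  rw [← sum_paths_fixed_last d θ L j]
  refine Finset.sum_congr rfl fun i' _ => ?_
  simp only [Fin.snocEquiv, Equiv.coe_fn_mk, Fin.prod_univ_castSucc, Fin.succ_castSucc,
    Fin.snoc_castSucc, Fin.succ_last, Fin.snoc_last, Fin.coe_castSucc, Fin.val_last]

lemma measurable_preact (d : ℕ → ℕ) (θ : ∀ l : ℕ, Fin (d l) → Fin (d (l + 1)) → ℝ) :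
    ∀ l (j : Fin (d (l + 1))), Measurable fun x : Fin (d 0) → ℝ => preact d θ x l j := by
  intro l
  induction l with
  | zero =>
    intro j
    exact Finset.measurable_sum _ fun i _ => (measurable_pi_apply i).const_mul _
  | succ l ih =>
    intro j
    exact Finset.measurable_sum _ fun i _ => (measurable_const.max (ih i)).const_mul _

/-- **Corollary (generalization error bound with the path-norm proxy for ReLU networks).**
The common feature distribution `ν` is supported on `[0,1]^{d_0}`; the classifier is the
output map of an `L`-layer ReLU network with parameters `θ` and `C = d (L+1)` output
nodes.  The generalization error of the global model is bounded by the path-norm proxy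
times the weighted total label-noise term. -/
theorem generalization_error_bound_pathNormProxy
    (L : ℕ) (hL : 1 ≤ L) (d : ℕ → ℕ) (hC : 1 ≤ d (L + 1))
    (θ : ∀ l : ℕ, Fin (d l) → Fin (d (l + 1)) → ℝ)
    (ν : Measure (Fin (d 0) → ℝ)) [IsProbabilityMeasure ν]
    (hν : ∀ᵐ x ∂ν, ∀ i, x i ∈ Set.Icc (0 : ℝ) 1)
    (N : ℕ) (hN : 1 ≤ N)
    (p : Fin N → (Fin (d 0) → ℝ) → Fin (d (L + 1)) → ℝ)
    (q : (Fin (d 0) → ℝ) → Fin (d (L + 1)) → ℝ)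
    (hpm : ∀ k, Measurable (p k)) (hqm : Measurable q)
    (hp0 : ∀ k x i, 0 ≤ p k x i) (hq0 : ∀ x i, 0 ≤ q x i)
    (hp1 : ∀ k, ∀ᵐ x ∂ν, ∑ i, p k x i = 1) (hq1 : ∀ᵐ x ∂ν, ∑ i, q x i = 1)
    (n : Fin N → ℕ) (hn : ∀ k, 0 < n k) :
    |∑ k, ((n k : ℝ) / (∑ j, (n j : ℝ))) * risk ν (fun x => preact d θ x L) (p k)
        - risk ν (fun x => preact d θ x L) q|
      ≤ pathNormProxy L d θ * ∑ k, ((n k : ℝ) / (∑ j, (n j : ℝ))) *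
          ∫ x, ∑ i, |p k x i - q x i| ∂ν := by
  classical
  set f : (Fin (d 0) → ℝ) → Fin (d (L + 1)) → ℝ := fun x => preact d θ x L with hfdef
  set B := pathNormProxy L d θ with hBdef
  have habs : ∀ a b : ℝ, |a - b| ≤ |a| + |b| := fun a b => by
    rw [sub_eq_add_neg]
    exact (abs_add_le _ _).trans (by rw [abs_neg])
  have hB0 : 0 ≤ B :=
    Finset.sum_nonneg fun i _ => Finset.prod_nonneg fun l _ => abs_nonneg _
  have hfm : ∀ i, Measurable fun x => f x i := fun i => measurable_preact d θ L i
  have hfb : ∀ᵐ x ∂ν, ∀ i, |f x i| ≤ B := by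
    filter_upwards [hν] with x hx i
    have hx1 : ∀ i, |x i| ≤ 1 := fun i => abs_le.2 ⟨by linarith [(hx i).1], (hx i).2⟩
    calc |f x i| ≤ pathB d θ L i := abs_preact_le_s5 d θ x hx1 L i
      _ ≤ ∑ j, pathB d θ L j :=
          Finset.single_le_sum (fun j _ => pathB_nonneg d θ L j) (Finset.mem_univ i)
      _ = B := (pathNormProxy_eq L d θ).symm
  have hCpos : 0 < (d (L + 1) : ℝ) := by exact_mod_cast hC
  have hlogC : 0 ≤ Real.log (d (L + 1)) := Real.log_nonneg (by exact_mod_cast hC)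
  set M : ℝ := Real.log (d (L + 1)) + 2 * B with hMdef
  have hne : Nonempty (Fin (d (L + 1))) := Fin.pos_iff_nonempty.mp (by omega)
  have hM : ∀ x, (∀ i, |f x i| ≤ B) → ∀ i, |crossEntropyLoss f x i| ≤ M := by
    intro x hx i
    have hZpos : 0 < ∑ r, Real.exp (f x r) :=
      Finset.sum_pos (fun r _ => Real.exp_pos _) Finset.univ_nonempty
    have hZle : ∑ r, Real.exp (f x r) ≤ (d (L + 1) : ℝ) * Real.exp B := by
      calc ∑ r, Real.exp (f x r) ≤ ∑ _r : Fin (d (L + 1)), Real.exp B :=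
            Finset.sum_le_sum fun r _ =>
              Real.exp_le_exp.2 ((le_abs_self _).trans (hx r))
        _ = (d (L + 1) : ℝ) * Real.exp B := by
            rw [Finset.sum_const, Finset.card_univ, Fintype.card_fin, nsmul_eq_mul]
    have hup : Real.log (∑ r, Real.exp (f x r)) ≤ Real.log (d (L + 1)) + B := by
      calc Real.log (∑ r, Real.exp (f x r))
          ≤ Real.log ((d (L + 1) : ℝ) * Real.exp B) := Real.log_le_log hZpos hZle
        _ = Real.log (d (L + 1)) + B := by
            rw [Real.log_mul hCpos.ne' (Real.exp_pos _).ne', Real.log_exp]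
    have hlo : -B ≤ Real.log (∑ r, Real.exp (f x r)) := by
      obtain ⟨i0⟩ := hne
      have h1 : Real.exp (f x i0) ≤ ∑ r, Real.exp (f x r) :=
        Finset.single_le_sum (fun r _ => (Real.exp_pos _).le) (Finset.mem_univ i0)
      have h2 : f x i0 ≤ Real.log (∑ r, Real.exp (f x r)) := by
        rw [← Real.log_exp (f x i0)]
        exact Real.log_le_log (Real.exp_pos _) h1
      have h3 : -B ≤ f x i0 := (abs_le.1 (hx i0)).1
      linarith
    have h4 := abs_le.1 (hx i)
    rw [crossEntropyLoss]
    refine abs_le.2 ⟨?_, ?_⟩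
    · rw [hMdef]; linarith [h4.2]
    · rw [hMdef]; linarith [h4.1]
  have hlm : ∀ i : Fin (d (L + 1)), Measurable fun x => crossEntropyLoss f x i := by
    intro i
    exact ((Finset.measurable_sum _ fun r _ => (hfm r).exp).log).sub (hfm i)
  -- generic integrability of the risk integrand
  have hint : ∀ (r : (Fin (d 0) → ℝ) → Fin (d (L + 1)) → ℝ), Measurable r →
      (∀ x i, 0 ≤ r x i) → (∀ᵐ x ∂ν, ∑ i, r x i = 1) →
      Integrable (fun x => ∑ i, r x i * crossEntropyLoss f x i) ν := by
    intro r hrm hr0 hr1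
    refine Integrable.mono' (integrable_const M) ?_ ?_
    · exact (Finset.measurable_sum _ fun i _ =>
        ((measurable_pi_apply i).comp hrm).mul (hlm i)).aestronglyMeasurable
    · filter_upwards [hfb, hr1] with x hbx h1
      rw [Real.norm_eq_abs]
      calc |∑ i, r x i * crossEntropyLoss f x i|
          ≤ ∑ i, |r x i * crossEntropyLoss f x i| := Finset.abs_sum_le_sum_abs _ _
        _ ≤ ∑ i, r x i * M := by
            refine Finset.sum_le_sum fun i _ => ?_
            rw [abs_mul, abs_of_nonneg (hr0 x i)]
            exact mul_le_mul_of_nonneg_left (hM x hbx i) (hr0 x i)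
        _ = M := by rw [← Finset.sum_mul, h1, one_mul]
  -- integrability of the deviation term
  have hdev : ∀ k, Integrable (fun x => ∑ i, |p k x i - q x i|) ν := by
    intro k
    refine Integrable.mono' (integrable_const (2 : ℝ)) ?_ ?_
    · exact (Finset.measurable_sum _ fun i _ =>
        (((measurable_pi_apply i).comp (hpm k)).sub
          ((measurable_pi_apply i).comp hqm)).abs).aestronglyMeasurable
    · filter_upwards [hp1 k, hq1] with x h1 h2
      rw [Real.norm_eq_abs, abs_of_nonneg (Finset.sum_nonneg fun i _ => abs_nonneg _)]
      calc ∑ i, |p k x i - q x i| ≤ ∑ i, (|p k x i| + |q x i|) :=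
            Finset.sum_le_sum fun i _ => habs _ _
        _ = 2 := by
            rw [Finset.sum_add_distrib]
            rw [Finset.sum_congr rfl fun i _ => abs_of_nonneg (hp0 k x i),
              Finset.sum_congr rfl fun i _ => abs_of_nonneg (hq0 x i), h1, h2]
            norm_num
  -- key per-client bound
  have hkey : ∀ k, |risk ν f (p k) - risk ν f q|
      ≤ B * ∫ x, ∑ i, |p k x i - q x i| ∂ν := by
    intro k
    have hIp := hint (p k) (hpm k) (hp0 k) (hp1 k)
    have hIq := hint q hqm hq0 hq1
    rw [risk, risk, ← integral_sub hIp hIq]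
    have hub : ∀ᵐ x ∂ν,
        ‖(∑ i, p k x i * crossEntropyLoss f x i) - ∑ i, q x i * crossEntropyLoss f x i‖
          ≤ B * ∑ i, |p k x i - q x i| := by
      filter_upwards [hfb, hp1 k, hq1] with x hbx h1 h2
      have e1 : (∑ i, p k x i * crossEntropyLoss f x i)
          - (∑ i, q x i * crossEntropyLoss f x i)
          = ∑ i, q x i * f x i - ∑ i, p k x i * f x i := by
        simp only [crossEntropyLoss, mul_sub]
        rw [Finset.sum_sub_distrib, Finset.sum_sub_distrib, ← Finset.sum_mul,
          ← Finset.sum_mul, h1, h2]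
        ring
      rw [Real.norm_eq_abs, e1, ← Finset.sum_sub_distrib]
      calc |∑ i, (q x i * f x i - p k x i * f x i)|
          ≤ ∑ i, |q x i * f x i - p k x i * f x i| := Finset.abs_sum_le_sum_abs _ _
        _ ≤ ∑ i, |p k x i - q x i| * B := by
            refine Finset.sum_le_sum fun i _ => ?_
            rw [← sub_mul, abs_mul, abs_sub_comm]
            exact mul_le_mul_of_nonneg_left (hbx i) (abs_nonneg _)
        _ = B * ∑ i, |p k x i - q x i| := by rw [← Finset.sum_mul, mul_comm]
    calc |∫ x, ((∑ i, p k x i * crossEntropyLoss f x i)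
            - ∑ i, q x i * crossEntropyLoss f x i) ∂ν|
        ≤ ∫ x, ‖(∑ i, p k x i * crossEntropyLoss f x i)
            - ∑ i, q x i * crossEntropyLoss f x i‖ ∂ν := by
          rw [← Real.norm_eq_abs]
          exact norm_integral_le_integral_norm _
      _ ≤ ∫ x, B * ∑ i, |p k x i - q x i| ∂ν :=
          integral_mono_ae (hIp.sub hIq).norm ((hdev k).const_mul B) hub
      _ = B * ∫ x, ∑ i, |p k x i - q x i| ∂ν := integral_const_mul _ _
  -- assembly
  have hS : (0 : ℝ) < ∑ j, (n j : ℝ) := by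
    have : Nonempty (Fin N) := Fin.pos_iff_nonempty.mp (by omega)
    exact Finset.sum_pos (fun k _ => by exact_mod_cast hn k) Finset.univ_nonempty
  set w : Fin N → ℝ := fun k => (n k : ℝ) / ∑ j, (n j : ℝ) with hwdef
  have hw0 : ∀ k, 0 ≤ w k := fun k => div_nonneg (Nat.cast_nonneg _) hS.le
  have hw1 : ∑ k, w k = 1 := by rw [hwdef, ← Finset.sum_div, div_self hS.ne']
  have e2 : ∑ k, w k * risk ν f (p k) - risk ν f q
      = ∑ k, w k * (risk ν f (p k) - risk ν f q) := by
    simp only [mul_sub]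
    rw [Finset.sum_sub_distrib, ← Finset.sum_mul, hw1, one_mul]
  rw [e2]
  calc |∑ k, w k * (risk ν f (p k) - risk ν f q)|
      ≤ ∑ k, |w k * (risk ν f (p k) - risk ν f q)| := Finset.abs_sum_le_sum_abs _ _
    _ ≤ ∑ k, w k * (B * ∫ x, ∑ i, |p k x i - q x i| ∂ν) := by
        refine Finset.sum_le_sum fun k _ => ?_
        rw [abs_mul, abs_of_nonneg (hw0 k)]
        exact mul_le_mul_of_nonneg_left (hkey k) (hw0 k)
    _ = B * ∑ k, w k * ∫ x, ∑ i, |p k x i - q x i| ∂ν := by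
        rw [Finset.mul_sum]
        exact Finset.sum_congr rfl fun k _ => by ring
end
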